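/- Let X be a set, let k ≥ 1, and let f_1, …, f_k : X → X be maps. For a word w ∈ {1,…,k}ⁿ write f_w for the corresponding n-fold composite, and for h : X → ℝ with h ≥ 1 pointwise and P ∈ X write S_n(h, P) = Σ_{w ∈ {1,…,k}ⁿ} h(f_w(P)). Suppose that the limit α = (1/k)·lim_{n→∞} S_n(h, P)^{1/n} exists and that k·α > 1. Then for every B > 1 the set {n ≥ 0 : S_n(h, P) ≤ B} is finite, and lim_{B→∞} #{n ≥ 0 : S_n(h, P) ≤ B} / log B = 1 / log(k·α). -/

import Mathlib

open Filter Topology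

/-- `compWord f w P` is the composite `f_{w_1} ∘ ⋯ ∘ f_{w_n}` applied to `P`,
for the word `w = (w_1, …, w_n)` over the alphabet `Fin k`. -/
def compWord {X : Type*} {k : ℕ} (f : Fin k → X → X) : List (Fin k) → X → X
  | [], P => P
  | i :: w, P => f i (compWord f w P)

/-- `heightSum f g n P = Σ_{w ∈ {1,…,k}ⁿ} g (f_w P)`, the sum over all `kⁿ` words of length `n`. -/
noncomputable def heightSum {X : Type*} {k : ℕ} (f : Fin k → X → X) (g : X → ℝ)
    (n : ℕ) (P : X) : ℝ :=
  ∑ w : Fin n → Fin k, g (compWord f (List.ofFn w) P)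

/-- if `h ≥ 1` pointwise, the arithmetic degree
`α = (1/k)·lim_n S_n(h,P)^{1/n}` exists and `k·α > 1`, then for every `B > 1` the set
`{n : S_n(h,P) ≤ B}` is finite, and `#{n : S_n(h,P) ≤ B} / log B → 1 / log(k·α)`
as `B → ∞`. -/
theorem counting_orbit_heights {X : Type*} {k : ℕ} (hk : 1 ≤ k)
    (f : Fin k → X → X) (h : X → ℝ) (hh : ∀ Q : X, 1 ≤ h Q) (P : X) (α : ℝ)
    (hα : Tendsto (fun n : ℕ => heightSum f h n P ^ ((n : ℝ)⁻¹)) atTop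
      (𝓝 ((k : ℝ) * α)))
    (hkα : 1 < (k : ℝ) * α) :
    (∀ B : ℝ, 1 < B → {n : ℕ | heightSum f h n P ≤ B}.Finite) ∧
    Tendsto (fun B : ℝ => ({n : ℕ | heightSum f h n P ≤ B}.ncard : ℝ) / Real.log B)
      atTop (𝓝 (1 / Real.log ((k : ℝ) * α))) := by
  set a : ℕ → ℝ := fun n => heightSum f h n P with ha
  set L : ℝ := Real.log ((k : ℝ) * α) with hLdef
  have hL : 0 < L := Real.log_pos hkα
  -- basic positivity
  have hge : ∀ n, ((k : ℝ)) ^ n ≤ a n := by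
    intro n
    have : ((k : ℝ)) ^ n = ∑ _w : Fin n → Fin k, (1 : ℝ) := by
      simp [Finset.card_univ, Fintype.card_fun]
    rw [this]
    exact Finset.sum_le_sum fun w _ => hh _
  have hk1 : (1 : ℝ) ≤ (k : ℝ) := by exact_mod_cast hk
  have ha1 : ∀ n, (1 : ℝ) ≤ a n := fun n => le_trans (one_le_pow₀ hk1) (hge n)
  have hapos : ∀ n, 0 < a n := fun n => lt_of_lt_of_le one_pos (ha1 n)
  -- log version of convergence
  have hlog : Tendsto (fun n : ℕ => ((n : ℝ))⁻¹ * Real.log (a n)) atTop (𝓝 L) := by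
    have hc : Tendsto Real.log (𝓝 ((k : ℝ) * α)) (𝓝 L) :=
      (Real.continuousAt_log (by linarith)).tendsto
    have := hc.comp hα
    refine this.congr fun n => ?_
    exact Real.log_rpow (hapos n) _
  -- a tends to infinity
  have hlogtop : Tendsto (fun n : ℕ => Real.log (a n)) atTop atTop := by
    have hmul : Tendsto (fun n : ℕ => (n : ℝ) * (((n : ℝ))⁻¹ * Real.log (a n)))
        atTop atTop :=
      Filter.Tendsto.atTop_mul_pos hL tendsto_natCast_atTop_atTop hlog
    refine hmul.congr' ?_
    filter_upwards [eventually_ge_atTop 1] with n hn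
    have hn0 : ((n : ℝ)) ≠ 0 := by positivity
    field_simp
  have hatop : Tendsto a atTop atTop := by
    have := Real.tendsto_exp_atTop.comp hlogtop
    refine this.congr fun n => Real.exp_log (hapos n)
  -- finiteness
  have hfin : ∀ B : ℝ, {n : ℕ | a n ≤ B}.Finite := by
    intro B
    have := hatop.eventually_gt_atTop B
    rw [← Nat.cofinite_eq_atTop, eventually_cofinite] at this
    simpa [not_lt] using this
  refine ⟨fun B _ => hfin B, ?_⟩
  -- the main limit
  rw [Metric.tendsto_atTop]
  intro ε' hε'
  -- choose ε
  set ε : ℝ := min (L / 2) (ε' * L ^ 2 / 8) with hεdef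
  have hεpos : 0 < ε := lt_min (by linarith) (by positivity)
  have hεL2 : ε ≤ L / 2 := min_le_left _ _
  have hεsmall : ε ≤ ε' * L ^ 2 / 8 := min_le_right _ _
  have hLε : 0 < L - ε := by linarith
  -- choose N₁
  obtain ⟨N₀, hN₀⟩ := Metric.tendsto_atTop.mp hlog ε hεpos
  set N₁ : ℕ := max N₀ 1 with hN₁def
  have key : ∀ n : ℕ, N₁ ≤ n →
      (L - ε) * n ≤ Real.log (a n) ∧ Real.log (a n) ≤ (L + ε) * n := by
    intro n hn
    have hn1 : 1 ≤ n := le_trans (le_max_right _ _) hn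
    have hnpos : (0 : ℝ) < n := by exact_mod_cast hn1
    have hd := hN₀ n (le_trans (le_max_left _ _) hn)
    rw [Real.dist_eq, abs_lt] at hd
    constructor
    · have : L - ε ≤ ((n : ℝ))⁻¹ * Real.log (a n) := by linarith [hd.1]
      calc (L - ε) * n ≤ (((n : ℝ))⁻¹ * Real.log (a n)) * n :=
            mul_le_mul_of_nonneg_right this (le_of_lt hnpos)
        _ = Real.log (a n) := by field_simp
    · have : ((n : ℝ))⁻¹ * Real.log (a n) ≤ L + ε := by linarith [hd.2]
      calc Real.log (a n) = (((n : ℝ))⁻¹ * Real.log (a n)) * n := by field_simp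
        _ ≤ (L + ε) * n := mul_le_mul_of_nonneg_right this (le_of_lt hnpos)
  -- B threshold
  set T : ℝ := max ((L + ε) * ((N₁ : ℝ) + 1)) (8 * ((N₁ : ℝ) + 1) / ε') with hTdef
  refine ⟨max (Real.exp T) 2, fun B hB => ?_⟩
  have hB2 : (2 : ℝ) ≤ B := le_trans (le_max_right _ _) hB
  have hBpos : (0 : ℝ) < B := by linarith
  have hBT : T ≤ Real.log B :=
    (Real.le_log_iff_exp_le hBpos).mpr (le_trans (le_max_left _ _) hB)
  have hTpos : 0 < T := by
    have : (0:ℝ) < (L + ε) * ((N₁ : ℝ) + 1) := by positivity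
    exact lt_of_lt_of_le this (le_max_left _ _)
  have hlogB : 0 < Real.log B := hTpos.trans_le hBT
  -- upper bound on the counting function
  have hupper : ({n : ℕ | a n ≤ B}.ncard : ℝ) ≤ (N₁ : ℝ) + Real.log B / (L - ε) + 1 := by
    set M₁ : ℕ := ⌊Real.log B / (L - ε)⌋₊ with hM₁
    have hsub : {n : ℕ | a n ≤ B} ⊆ ↑(Finset.range (N₁ + M₁ + 1)) := by
      intro n hn
      simp only [Finset.coe_range, Set.mem_Iio]
      rcases lt_or_ge n N₁ with h' | h'
      · omega
      · have hkey := (key n h').1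
        have hlogan : Real.log (a n) ≤ Real.log B := Real.log_le_log (hapos n) hn
        have : (n : ℝ) ≤ Real.log B / (L - ε) := by
          rw [le_div_iff₀ hLε]
          calc (n : ℝ) * (L - ε) = (L - ε) * n := mul_comm _ _
            _ ≤ Real.log (a n) := hkey
            _ ≤ Real.log B := hlogan
        have : n ≤ M₁ := Nat.le_floor this
        omega
    have hcard : {n : ℕ | a n ≤ B}.ncard ≤ N₁ + M₁ + 1 := by
      calc {n : ℕ | a n ≤ B}.ncard ≤ (↑(Finset.range (N₁ + M₁ + 1)) : Set ℕ).ncard :=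
            Set.ncard_le_ncard hsub (Finset.finite_toSet _)
        _ = N₁ + M₁ + 1 := by rw [Set.ncard_coe_finset, Finset.card_range]
    have hM₁le : (M₁ : ℝ) ≤ Real.log B / (L - ε) :=
      Nat.floor_le (by positivity)
    calc ({n : ℕ | a n ≤ B}.ncard : ℝ) ≤ ((N₁ + M₁ + 1 : ℕ) : ℝ) := by exact_mod_cast hcard
      _ = (N₁ : ℝ) + (M₁ : ℝ) + 1 := by push_cast; ring
      _ ≤ (N₁ : ℝ) + Real.log B / (L - ε) + 1 := by linarith
  -- lower bound on the counting function
  have hlower : Real.log B / (L + ε) - (N₁ : ℝ) ≤ ({n : ℕ | a n ≤ B}.ncard : ℝ) := by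
    set M₂ : ℕ := ⌊Real.log B / (L + ε)⌋₊ with hM₂
    have hN₁M₂ : N₁ + 1 ≤ M₂ := by
      apply Nat.le_floor
      rw [le_div_iff₀ (by linarith : (0:ℝ) < L + ε)]
      push_cast
      calc ((N₁ : ℝ) + 1) * (L + ε) = (L + ε) * ((N₁ : ℝ) + 1) := mul_comm _ _
        _ ≤ T := le_max_left _ _
        _ ≤ Real.log B := hBT
    have hsub : ↑(Finset.Icc N₁ M₂) ⊆ {n : ℕ | a n ≤ B} := by
      intro n hn
      simp only [Finset.coe_Icc, Set.mem_Icc] at hn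
      have hkey := (key n hn.1).2
      have hnM : (n : ℝ) ≤ Real.log B / (L + ε) := by
        calc (n : ℝ) ≤ (M₂ : ℝ) := by exact_mod_cast hn.2
          _ ≤ Real.log B / (L + ε) := Nat.floor_le (by positivity)
      have hlogle : Real.log (a n) ≤ Real.log B := by
        calc Real.log (a n) ≤ (L + ε) * n := hkey
          _ ≤ (L + ε) * (Real.log B / (L + ε)) :=
            mul_le_mul_of_nonneg_left hnM (by linarith)
          _ = Real.log B := by field_simp
      show a n ≤ B
      calc a n = Real.exp (Real.log (a n)) := (Real.exp_log (hapos n)).symm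
        _ ≤ Real.exp (Real.log B) := Real.exp_le_exp.mpr hlogle
        _ = B := Real.exp_log hBpos
    have hcard : M₂ + 1 - N₁ ≤ {n : ℕ | a n ≤ B}.ncard := by
      calc M₂ + 1 - N₁ = (Finset.Icc N₁ M₂).card := (Nat.card_Icc _ _).symm
        _ = (↑(Finset.Icc N₁ M₂) : Set ℕ).ncard := (Set.ncard_coe_finset _).symm
        _ ≤ {n : ℕ | a n ≤ B}.ncard := Set.ncard_le_ncard hsub (hfin B)
    have hM₂gt : Real.log B / (L + ε) < (M₂ : ℝ) + 1 := Nat.lt_floor_add_one _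
    have : ((M₂ + 1 - N₁ : ℕ) : ℝ) = (M₂ : ℝ) + 1 - (N₁ : ℝ) := by
      have : N₁ ≤ M₂ + 1 := by omega
      push_cast [Nat.cast_sub this]
      ring
    calc Real.log B / (L + ε) - (N₁ : ℝ) ≤ (M₂ : ℝ) + 1 - (N₁ : ℝ) := by linarith
      _ = ((M₂ + 1 - N₁ : ℕ) : ℝ) := this.symm
      _ ≤ ({n : ℕ | a n ≤ B}.ncard : ℝ) := by exact_mod_cast hcard
  -- put everything together
  rw [Real.dist_eq, abs_lt]
  have hT1 : 8 * ((N₁ : ℝ) + 1) / ε' ≤ Real.log B := le_trans (le_max_right _ _) hBT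
  have hN₁logB : ((N₁ : ℝ) + 1) / Real.log B ≤ ε' / 8 := by
    rw [div_le_div_iff₀ hlogB (by norm_num : (0:ℝ) < 8)]
    have := (div_le_iff₀ hε').mp hT1
    nlinarith
  have hup' : ({n : ℕ | a n ≤ B}.ncard : ℝ) / Real.log B ≤
      1 / (L - ε) + ((N₁ : ℝ) + 1) / Real.log B := by
    calc ({n : ℕ | a n ≤ B}.ncard : ℝ) / Real.log B
        ≤ ((N₁ : ℝ) + Real.log B / (L - ε) + 1) / Real.log B := by gcongr
      _ = 1 / (L - ε) + ((N₁ : ℝ) + 1) / Real.log B := by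
          field_simp
          ring_nf
  have hlo' : 1 / (L + ε) - (N₁ : ℝ) / Real.log B ≤
      ({n : ℕ | a n ≤ B}.ncard : ℝ) / Real.log B := by
    calc 1 / (L + ε) - (N₁ : ℝ) / Real.log B
        = (Real.log B / (L + ε) - (N₁ : ℝ)) / Real.log B := by
          field_simp
      _ ≤ ({n : ℕ | a n ≤ B}.ncard : ℝ) / Real.log B := by gcongr
  have e1 : 1 / (L - ε) - 1 / L = ε / ((L - ε) * L) := by
    rw [div_sub_div _ _ (ne_of_gt hLε) (ne_of_gt hL)]
    congr 1
    ring
  have e2 : 1 / L - 1 / (L + ε) = ε / (L * (L + ε)) := by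
    rw [div_sub_div _ _ (ne_of_gt hL) (by positivity)]
    congr 1
    ring
  have b1 : 1 / (L - ε) - 1 / L ≤ ε' / 4 := by
    rw [e1, div_le_iff₀ (by positivity)]
    linarith [mul_nonneg (mul_nonneg hε'.le hL.le) (show (0:ℝ) ≤ L / 2 - ε by linarith), hεsmall]
  have b2 : 1 / L - 1 / (L + ε) ≤ ε' / 8 := by
    rw [e2, div_le_iff₀ (by positivity)]
    linarith [mul_nonneg (mul_nonneg hε'.le hL.le) hεpos.le, hεsmall]
  have hfrac : (N₁ : ℝ) / Real.log B ≤ ((N₁ : ℝ) + 1) / Real.log B := by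
    gcongr
    linarith
  constructor
  · linarith
  · linarith
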